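/- Suppose |Yᵢ| ≤ k₁ almost surely for all i, that 1/pᵢ(e) ≤ k₂ for all i and e ∈ {a, b}, and that P(dᵢ = e, dⱼ = e) > 0 for all i ≠ j and e ∈ {a, b}. Define C(e), E(e), U(e) as the design dependence, correlated-error, and unit-error terms: C(e) = (1/n²)ΣᵢΣ_{j≠i}|Cov(1{dᵢ=e}, 1{dⱼ=e})|, E(e) = (1/n²)ΣᵢΣ_{j≠i} ε̃ᵢⱼ(e,e)ε̃ⱼᵢ(e,e), U(e) = (1/n²)ΣᵢΣ_{j≠i} Cov(ε̇ᵢⱼ, ε̇ⱼᵢ | dᵢ = e, dⱼ = e), and write [x]⁺ = max(x, 0). Then the root mean square error satisfies √(E[(τ̂ − τ̄)²]) ≤ 3k₁√(k₂/n) + 5k₁k₂(√C(a) + √C(b)) + 2(√([E(a)]⁺) + √([E(b)]⁺) + √([U(a)]⁺) + √([U(b)]⁺)). -/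

import Mathlib

open MeasureTheory ProbabilityTheory Real Finset

/-- Covariance of two real random variables under a measure `P`. -/
noncomputable def cov {Ω : Type*} [MeasurableSpace Ω] (P : MeasureTheory.Measure Ω)
    (X Y : Ω → ℝ) : ℝ :=
  (∫ ω, X ω * Y ω ∂P) - (∫ ω, X ω ∂P) * ∫ ω, Y ω ∂P

/-- Covariance of two real random variables under the conditional measure `P(·|A)`. -/
noncomputable def condCov {Ω : Type*} [MeasurableSpace Ω] (P : MeasureTheory.Measure Ω)
    (A : Set Ω) (X Y : Ω → ℝ) : ℝ :=
  (∫ ω, X ω * Y ω ∂(P[|A])) - (∫ ω, X ω ∂(P[|A])) * ∫ ω, Y ω ∂(P[|A])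

section Helpers
variable {Ω : Type*} [MeasurableSpace Ω] {P : Measure Ω}

lemma my_sqrt_add {x y : ℝ} (hx : 0 ≤ x) (hy : 0 ≤ y) :
    Real.sqrt (x + y) ≤ Real.sqrt x + Real.sqrt y := by
  have h : x + y ≤ (Real.sqrt x + Real.sqrt y) ^ 2 := by
    have hx' := Real.sq_sqrt hx
    have hy' := Real.sq_sqrt hy
    nlinarith [Real.sqrt_nonneg x, Real.sqrt_nonneg y,
      mul_nonneg (Real.sqrt_nonneg x) (Real.sqrt_nonneg y)]
  calc Real.sqrt (x + y) ≤ Real.sqrt ((Real.sqrt x + Real.sqrt y) ^ 2) := Real.sqrt_le_sqrt h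
    _ = Real.sqrt x + Real.sqrt y := Real.sqrt_sq (by positivity)

lemma my_sqrt_two_mul {x y : ℝ} (hx : 0 ≤ x) (hy : 0 ≤ y) :
    Real.sqrt x + Real.sqrt y ≤ Real.sqrt 2 * Real.sqrt (x + y) := by
  have h : (Real.sqrt x + Real.sqrt y) ^ 2 ≤ 2 * (x + y) := by
    have hx' := Real.sq_sqrt hx
    have hy' := Real.sq_sqrt hy
    nlinarith [sq_nonneg (Real.sqrt x - Real.sqrt y)]
  calc Real.sqrt x + Real.sqrt y
      = Real.sqrt ((Real.sqrt x + Real.sqrt y) ^ 2) := (Real.sqrt_sq (by positivity)).symm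
    _ ≤ Real.sqrt (2 * (x + y)) := Real.sqrt_le_sqrt h
    _ = Real.sqrt 2 * Real.sqrt (x + y) := Real.sqrt_mul (by norm_num) _

lemma integrable_of_bdd [IsFiniteMeasure P] {f : Ω → ℝ} {B : ℝ}
    (hm : AEStronglyMeasurable f P) (hb : ∀ᵐ ω ∂P, |f ω| ≤ B) : Integrable f P :=
  Integrable.mono' (integrable_const B) hm (by simpa [Real.norm_eq_abs] using hb)

lemma integrable_mul_of_bdd [IsFiniteMeasure P] {f g : Ω → ℝ} {Bf Bg : ℝ}
    (hfm : AEStronglyMeasurable f P) (hgm : AEStronglyMeasurable g P)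
    (hbf : ∀ᵐ ω ∂P, |f ω| ≤ Bf) (hbg : ∀ᵐ ω ∂P, |g ω| ≤ Bg) :
    Integrable (fun ω => f ω * g ω) P := by
  refine Integrable.mono' (integrable_const (Bf * Bg)) (hfm.mul hgm) ?_
  filter_upwards [hbf, hbg] with ω h1 h2
  rw [Real.norm_eq_abs, abs_mul]
  exact mul_le_mul h1 h2 (abs_nonneg _) (le_trans (abs_nonneg _) h1)

lemma mass_cond_le [IsProbabilityMeasure P] (S : Set Ω) : (P[|S]) Set.univ ≤ 1 := by
  rw [ProbabilityTheory.cond]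
  simp only [Measure.smul_apply, smul_eq_mul, Measure.restrict_apply MeasurableSet.univ,
    Set.univ_inter]
  exact ENNReal.inv_mul_le_one _

lemma abs_integral_le_of_mass_le {μ : Measure Ω} (hμ : μ Set.univ ≤ 1) {f : Ω → ℝ} {B : ℝ}
    (hB : 0 ≤ B) (hb : ∀ᵐ ω ∂μ, |f ω| ≤ B) : |∫ ω, f ω ∂μ| ≤ B := by
  have : IsFiniteMeasure μ := ⟨lt_of_le_of_lt hμ ENNReal.one_lt_top⟩
  have h1 : ‖∫ ω, f ω ∂μ‖ ≤ B * (μ Set.univ).toReal :=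
    norm_integral_le_of_norm_le_const (by simpa [Real.norm_eq_abs] using hb)
  have h2 : (μ Set.univ).toReal ≤ 1 := by
    simpa using ENNReal.toReal_mono (by simp) hμ
  calc |∫ ω, f ω ∂μ| ≤ B * (μ Set.univ).toReal := by simpa [Real.norm_eq_abs] using h1
    _ ≤ B * 1 := by exact mul_le_mul_of_nonneg_left h2 hB
    _ = B := mul_one B

lemma ae_cond_of_ae {S : Set Ω} {Q : Ω → Prop} (h : ∀ᵐ ω ∂P, Q ω) :
    ∀ᵐ ω ∂(P[|S]), Q ω :=
  cond_absolutelyContinuous.ae_le h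

lemma ae_cond_mem {S : Set Ω} (hS : MeasurableSet S) : ∀ᵐ ω ∂(P[|S]), ω ∈ S := by
  rw [ProbabilityTheory.cond]
  exact Measure.ae_smul_measure_le _ (ae_restrict_mem hS)

lemma setIntegral_eq_cond [IsProbabilityMeasure P] {S : Set Ω} (f : Ω → ℝ) :
    ∫ ω in S, f ω ∂P = (P S).toReal * ∫ ω, f ω ∂(P[|S]) := by
  rcases eq_or_ne (P S) 0 with h | h
  · rw [Measure.restrict_eq_zero.mpr h, cond_eq_zero_of_meas_eq_zero h]
    simp
  · have hfin : P S ≠ ⊤ := measure_ne_top P S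
    rw [ProbabilityTheory.cond, integral_smul_measure, ENNReal.toReal_inv, smul_eq_mul,
      ← mul_assoc, mul_inv_cancel₀ (ENNReal.toReal_ne_zero.mpr ⟨h, hfin⟩), one_mul]

lemma cond_zero_integral {S : Set Ω} (h : P S = 0) (f : Ω → ℝ) :
    ∫ ω, f ω ∂(P[|S]) = 0 := by
  rw [cond_eq_zero_of_meas_eq_zero h]; simp

end Helpers

section CS
variable {Ω : Type*} [MeasurableSpace Ω] {P : Measure Ω}

lemma integral_cauchy_schwarz {f g : Ω → ℝ}
    (hf2 : Integrable (fun ω => f ω ^ 2) P) (hg2 : Integrable (fun ω => g ω ^ 2) P)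
    (hfg : Integrable (fun ω => f ω * g ω) P) :
    ∫ ω, f ω * g ω ∂P ≤ Real.sqrt (∫ ω, f ω ^ 2 ∂P) * Real.sqrt (∫ ω, g ω ^ 2 ∂P) := by
  set A := ∫ ω, f ω ^ 2 ∂P with hA
  set B := ∫ ω, g ω ^ 2 ∂P with hB
  set C := ∫ ω, f ω * g ω ∂P with hC
  have hA0 : 0 ≤ A := integral_nonneg fun ω => sq_nonneg _
  have hB0 : 0 ≤ B := integral_nonneg fun ω => sq_nonneg _
  rcases eq_or_lt_of_le hB0 with hB1 | hB1
  · have hg0 : (fun ω => g ω ^ 2) =ᵐ[P] 0 :=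
      (integral_eq_zero_iff_of_nonneg (fun ω => sq_nonneg _) hg2).mp hB1.symm
    have hC0 : C = 0 := by
      rw [hC]
      refine integral_eq_zero_of_ae ?_
      filter_upwards [hg0] with ω h
      have : g ω = 0 := by
        simp only [Pi.zero_apply] at h
        exact pow_eq_zero_iff (by norm_num) |>.mp h
      simp [this]
    rw [hC0, ← hB1]
    simp
  · have hB' : B ≠ 0 := ne_of_gt hB1
    have key : 0 ≤ A - C ^ 2 / B := by
      have h0 : 0 ≤ ∫ ω, (f ω - (C / B) * g ω) ^ 2 ∂P := integral_nonneg fun ω => sq_nonneg _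
      rw [show (fun ω => (f ω - (C / B) * g ω) ^ 2)
          = fun ω => (f ω ^ 2 - (2 * (C / B)) * (f ω * g ω)) + (C / B) ^ 2 * g ω ^ 2
          from funext fun ω => by ring] at h0
      have hi1 : Integrable (fun ω => f ω ^ 2 - 2 * (C / B) * (f ω * g ω)) P := by
        exact hf2.sub (hfg.const_mul _)
      have hi2 : Integrable (fun ω => (C / B) ^ 2 * g ω ^ 2) P := by
        exact hg2.const_mul _
      rw [integral_add hi1 hi2,
        integral_sub hf2 (by exact hfg.const_mul _ :
          Integrable (fun ω => 2 * (C / B) * (f ω * g ω)) P),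
        integral_const_mul, integral_const_mul] at h0
      have h1 : 0 ≤ A - 2 * (C / B) * C + (C / B) ^ 2 * B := h0
      have h2 : 2 * (C / B) * C - (C / B) ^ 2 * B = C ^ 2 / B := by
        field_simp; ring
      linarith [h1]
    have h2 : C ^ 2 ≤ A * B := by
      have h3 : C ^ 2 / B ≤ A := by linarith
      exact (div_le_iff₀ hB1).mp h3
    calc C ≤ |C| := le_abs_self C
      _ = Real.sqrt (C ^ 2) := (Real.sqrt_sq_eq_abs C).symm
      _ ≤ Real.sqrt (A * B) := Real.sqrt_le_sqrt h2
      _ = Real.sqrt A * Real.sqrt B := Real.sqrt_mul hA0 B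

lemma L2_triangle {f g : Ω → ℝ}
    (hf2 : Integrable (fun ω => f ω ^ 2) P) (hg2 : Integrable (fun ω => g ω ^ 2) P)
    (hfg : Integrable (fun ω => f ω * g ω) P) :
    Real.sqrt (∫ ω, (f ω + g ω) ^ 2 ∂P)
      ≤ Real.sqrt (∫ ω, f ω ^ 2 ∂P) + Real.sqrt (∫ ω, g ω ^ 2 ∂P) := by
  set A := ∫ ω, f ω ^ 2 ∂P with hA
  set B := ∫ ω, g ω ^ 2 ∂P with hB
  have hA0 : 0 ≤ A := integral_nonneg fun ω => sq_nonneg _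
  have hB0 : 0 ≤ B := integral_nonneg fun ω => sq_nonneg _
  have hCS := integral_cauchy_schwarz hf2 hg2 hfg
  have hexp : ∫ ω, (f ω + g ω) ^ 2 ∂P = A + 2 * ∫ ω, f ω * g ω ∂P + B := by
    rw [show (fun ω => (f ω + g ω) ^ 2)
        = fun ω => f ω ^ 2 + 2 * (f ω * g ω) + g ω ^ 2 from funext fun ω => by ring]
    rw [integral_add (by exact hf2.add (hfg.const_mul _) :
        Integrable (fun ω => f ω ^ 2 + 2 * (f ω * g ω)) P) hg2,
      integral_add hf2 (by exact hfg.const_mul _ : Integrable (fun ω => 2 * (f ω * g ω)) P),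
      integral_const_mul]
  have hle : ∫ ω, (f ω + g ω) ^ 2 ∂P ≤ (Real.sqrt A + Real.sqrt B) ^ 2 := by
    rw [hexp]
    have hAA := Real.sq_sqrt hA0
    have hBB := Real.sq_sqrt hB0
    nlinarith [hCS]
  calc Real.sqrt (∫ ω, (f ω + g ω) ^ 2 ∂P) ≤ Real.sqrt ((Real.sqrt A + Real.sqrt B) ^ 2) :=
        Real.sqrt_le_sqrt hle
    _ = Real.sqrt A + Real.sqrt B := Real.sqrt_sq (by positivity)

lemma integral_sum_sq {n : ℕ} (f : Fin n → Ω → ℝ)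
    (h : ∀ i j : Fin n, Integrable (fun ω => f i ω * f j ω) P) :
    ∫ ω, (∑ i, f i ω) ^ 2 ∂P = ∑ i, ∑ j, ∫ ω, f i ω * f j ω ∂P := by
  have hexp : ∀ ω, (∑ i, f i ω) ^ 2 = ∑ i, ∑ j, f i ω * f j ω := by
    intro ω; rw [sq, Finset.sum_mul_sum]
  rw [show (fun ω => (∑ i, f i ω) ^ 2) = fun ω => ∑ i, ∑ j, f i ω * f j ω from funext hexp]
  rw [integral_finset_sum _ fun i _ => integrable_finset_sum _ fun j _ => h i j]
  exact Finset.sum_congr rfl fun i _ => integral_finset_sum _ fun j _ => h i j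

end CS

section Key

set_option maxHeartbeats 2000000 in
lemma key_exposure {Ω : Type*} [MeasurableSpace Ω] (P : Measure Ω) [IsProbabilityMeasure P]
    {Δ : Type*} [DecidableEq Δ] [MeasurableSpace Δ] [MeasurableSingletonClass Δ]
    {n : ℕ} (hn : 0 < n) (d : Fin n → Ω → Δ) (Y : Fin n → Ω → ℝ)
    (hd : ∀ i, Measurable (d i)) (hY : ∀ i, Measurable (Y i))
    {k₁ k₂ : ℝ} (hk₁ : 0 ≤ k₁) (hbdd : ∀ i, ∀ᵐ ω ∂P, |Y i ω| ≤ k₁)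
    (e : Δ)
    (p : Fin n → ℝ) (hp : ∀ i, p i = (P {ω | d i ω = e}).toReal)
    (hk₂ : ∀ i, 1 / p i ≤ k₂)
    (hpos : ∀ i j : Fin n, i ≠ j → 0 < P ({ω | d i ω = e} ∩ {ω | d j ω = e}))
    (yb : Fin n → ℝ) (hyb : ∀ i, yb i = ∫ ω, Y i ω ∂(P[|{ω | d i ω = e}]))
    (μb : Fin n → Fin n → ℝ)
    (hμb : ∀ i j, μb i j = ∫ ω, Y i ω ∂(P[|{ω | d i ω = e} ∩ {ω | d j ω = e}]))
    (C E U : ℝ)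
    (hC : C = (1 / (n : ℝ) ^ 2) * ∑ i, ∑ j ∈ Finset.univ.erase i,
      |cov P (fun ω => if d i ω = e then (1 : ℝ) else 0)
        (fun ω => if d j ω = e then (1 : ℝ) else 0)|)
    (hE : E = (1 / (n : ℝ) ^ 2) * ∑ i, ∑ j ∈ Finset.univ.erase i,
      (μb i j - yb i) * (μb j i - yb j))
    (hU : U = (1 / (n : ℝ) ^ 2) * ∑ i, ∑ j ∈ Finset.univ.erase i,
      ∫ ω, (Y i ω - μb i j) * (Y j ω - μb j i) ∂(P[|{ω | d i ω = e} ∩ {ω | d j ω = e}])) :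
    Real.sqrt (∫ ω, ((1 / (n : ℝ)) * ∑ i, ((if d i ω = e then Y i ω else 0) / p i - yb i)) ^ 2 ∂P)
      ≤ Real.sqrt 2 * k₁ * Real.sqrt (k₂ / n)
        + 4 * (k₁ * k₂) * Real.sqrt C
        + Real.sqrt (max E 0) + Real.sqrt (max U 0) := by
  -- basic sets and notation
  set S : Fin n → Set Ω := fun i => {ω | d i ω = e} with hSdef
  have hSm : ∀ i, MeasurableSet (S i) := fun i => (hd i) (measurableSet_singleton e)
  set I : Fin n → Ω → ℝ := fun i ω => if d i ω = e then 1 else 0 with hIdef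
  have hIm : ∀ i, Measurable (I i) :=
    fun i => Measurable.ite (hSm i) measurable_const measurable_const
  have hIb : ∀ i ω, |I i ω| ≤ 1 := by
    intro i ω; simp only [hIdef]; split_ifs <;> simp
  set q : Fin n → Fin n → ℝ := fun i j => (P (S i ∩ S j)).toReal with hqdef
  set c : Fin n → ℝ := fun i => yb i / p i with hcdef
  -- probability facts
  have hp0 : ∀ i, 0 ≤ p i := fun i => by rw [hp i]; exact ENNReal.toReal_nonneg
  have hp1 : ∀ i, p i ≤ 1 := fun i => by
    rw [hp i]; simpa using ENNReal.toReal_mono (by simp) (prob_le_one (μ := P))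
  have hpinv0 : ∀ i, 0 ≤ 1 / p i := fun i => one_div_nonneg.mpr (hp0 i)
  have hk₂0 : 0 ≤ k₂ := le_trans (hpinv0 ⟨0, hn⟩) (hk₂ ⟨0, hn⟩)
  have hpinv1 : ∀ i, p i * (1 / p i) ≤ 1 := by
    intro i
    rcases eq_or_lt_of_le (hp0 i) with h | h
    · rw [← h]; norm_num
    · rw [mul_one_div, div_self (ne_of_gt h)]
  -- bounds on conditional means
  have hyb_abs : ∀ i, |yb i| ≤ k₁ := by
    intro i; rw [hyb i]
    exact abs_integral_le_of_mass_le (mass_cond_le _) hk₁ (ae_cond_of_ae (hbdd i))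
  have hyb_sq : ∀ i, yb i ^ 2 ≤ k₁ ^ 2 := by
    intro i
    calc yb i ^ 2 = |yb i| ^ 2 := (sq_abs _).symm
      _ ≤ k₁ ^ 2 := pow_le_pow_left₀ (abs_nonneg _) (hyb_abs i) 2
  have hμb_abs : ∀ i j, |μb i j| ≤ k₁ := by
    intro i j; rw [hμb i j]
    exact abs_integral_le_of_mass_le (mass_cond_le _) hk₁ (ae_cond_of_ae (hbdd i))
  have hyb0 : ∀ i, p i = 0 → yb i = 0 := by
    intro i h
    have h0 : P (S i) = 0 := by
      have := hp i
      rw [h] at this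
      rcases (ENNReal.toReal_eq_zero_iff _).mp this.symm with h' | h'
      · exact h'
      · exact absurd h' (measure_ne_top P _)
    rw [hyb i]
    exact cond_zero_integral h0 _
  have hycp : ∀ i, yb i = c i * p i := by
    intro i
    rcases eq_or_lt_of_le (hp0 i) with h | h
    · rw [hyb0 i h.symm, ← h, mul_zero]
    · simp only [hcdef]; rw [div_mul_cancel₀ _ (ne_of_gt h)]
  have hc_abs : ∀ i, |c i| ≤ k₁ * k₂ := by
    intro i
    simp only [hcdef, abs_div]
    rw [abs_of_nonneg (hp0 i), div_eq_mul_inv, ← one_div]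
    exact mul_le_mul (hyb_abs i) (hk₂ i) (hpinv0 i) hk₁
  -- the two processes
  set M : Fin n → Ω → ℝ := fun i ω => c i * I i ω - yb i with hMdef
  set N : Fin n → Ω → ℝ := fun i ω => (1 / p i) * (if d i ω = e then Y i ω - yb i else 0)
    with hNdef
  have hMm : ∀ i, Measurable (M i) := fun i => ((hIm i).const_mul _).sub measurable_const
  have hNm : ∀ i, Measurable (N i) := fun i =>
    (Measurable.ite (hSm i) ((hY i).sub measurable_const) measurable_const).const_mul _
  have hMb : ∀ i ω, |M i ω| ≤ k₁ * k₂ + k₁ := by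
    intro i ω
    calc |M i ω| ≤ |c i * I i ω| + |yb i| := abs_sub _ _
      _ ≤ k₁ * k₂ * 1 + k₁ := by
          gcongr
          · rw [abs_mul]
            exact mul_le_mul (hc_abs i) (hIb i ω) (abs_nonneg _) (by positivity)
          · exact hyb_abs i
      _ = k₁ * k₂ + k₁ := by ring
  have hNb : ∀ i, ∀ᵐ ω ∂P, |N i ω| ≤ k₂ * (2 * k₁) := by
    intro i
    filter_upwards [hbdd i] with ω hω
    simp only [hNdef, abs_mul]
    rw [abs_of_nonneg (hpinv0 i)]
    have h2 : |if d i ω = e then Y i ω - yb i else 0| ≤ 2 * k₁ := by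
      split_ifs
      · calc |Y i ω - yb i| ≤ |Y i ω| + |yb i| := abs_sub _ _
          _ ≤ k₁ + k₁ := add_le_add hω (hyb_abs i)
          _ = 2 * k₁ := by ring
      · simp; positivity
    exact mul_le_mul (hk₂ i) h2 (abs_nonneg _) hk₂0
  -- primed hypotheses in terms of S
  have hp' : ∀ i, p i = (P (S i)).toReal := fun i => hp i
  have hpos' : ∀ i j, i ≠ j → 0 < P (S i ∩ S j) := fun i j h => hpos i j h
  have hμb' : ∀ i j, μb i j = ∫ ω, Y i ω ∂(P[|S i ∩ S j]) := fun i j => hμb i j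
  have hyb'' : ∀ i, yb i = ∫ ω, Y i ω ∂(P[|S i]) := fun i => hyb i
  have hcovdef : ∀ X Z : Ω → ℝ, cov P X Z
      = (∫ ω, X ω * Z ω ∂P) - (∫ ω, X ω ∂P) * ∫ ω, Z ω ∂P := fun _ _ => rfl
  -- indicator integrals
  have hindI : ∀ (i : Fin n) (ω : Ω), I i ω = (S i).indicator (fun _ => (1 : ℝ)) ω := by
    intro i ω
    by_cases h : d i ω = e <;>
      simp [hIdef, hSdef, Set.indicator_apply, Set.mem_setOf_eq, h]
  have hIint : ∀ i, ∫ ω, I i ω ∂P = p i := by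
    intro i
    rw [show I i = (S i).indicator (fun _ => (1 : ℝ)) from funext (hindI i),
      integral_indicator_const _ (hSm i), hp' i, smul_eq_mul, mul_one]
    rfl
  have hindII : ∀ (i j : Fin n) (ω : Ω), I i ω * I j ω
      = (S i ∩ S j).indicator (fun _ => (1 : ℝ)) ω := by
    intro i j ω
    by_cases h1 : d i ω = e <;> by_cases h2 : d j ω = e <;>
      simp [hIdef, hSdef, Set.indicator_apply, Set.mem_setOf_eq, Set.mem_inter_iff, h1, h2]
  have hIIint : ∀ i j, ∫ ω, I i ω * I j ω ∂P = q i j := by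
    intro i j
    rw [show (fun ω => I i ω * I j ω) = (S i ∩ S j).indicator (fun _ => (1 : ℝ))
        from funext (hindII i j),
      integral_indicator_const _ ((hSm i).inter (hSm j)), smul_eq_mul, mul_one]
    rfl
  have hcov : ∀ i j, cov P (I i) (I j) = q i j - p i * p j := by
    intro i j
    rw [hcovdef, hIIint i j, hIint i, hIint j]
  have hIint_i : ∀ i, Integrable (I i) P := fun i =>
    integrable_of_bdd (hIm i).aestronglyMeasurable (Filter.Eventually.of_forall (hIb i))
  -- the M products
  have hMij : ∀ i j, ∫ ω, M i ω * M j ω ∂P = c i * c j * cov P (I i) (I j) := by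
    intro i j
    have i1 : Integrable (fun ω => (c i * c j) * (I i ω * I j ω)) P := by
      exact (integrable_mul_of_bdd (hIm i).aestronglyMeasurable (hIm j).aestronglyMeasurable
        (Filter.Eventually.of_forall (hIb i)) (Filter.Eventually.of_forall (hIb j))).const_mul _
    have i2 : Integrable (fun ω => (c i * yb j) * I i ω) P := by
      exact (hIint_i i).const_mul _
    have i3 : Integrable (fun ω => (c j * yb i) * I j ω) P := by
      exact (hIint_i j).const_mul _
    rw [show (fun ω => M i ω * M j ω) = fun ω =>
        (c i * c j) * (I i ω * I j ω) - (c i * yb j) * I i ω - (c j * yb i) * I j ω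
          + yb i * yb j
        from funext fun ω => by simp only [hMdef]; ring]
    rw [integral_add (by exact (i1.sub i2).sub i3) (integrable_const _),
      integral_sub (by exact i1.sub i2) i3, integral_sub i1 i2,
      integral_const_mul, integral_const_mul, integral_const_mul, integral_const,
      hIIint i j, hIint i, hIint j, hcov i j]
    simp only [probReal_univ, smul_eq_mul, one_mul]
    rw [hycp i, hycp j]; ring
  have hMdiag : ∀ i, c i * c i * cov P (I i) (I i) ≤ k₂ * yb i ^ 2 := by
    intro i
    have hqii : q i i = p i := by
      simp only [hqdef, Set.inter_self]; exact (hp' i).symm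
    have hcv : cov P (I i) (I i) = p i - p i * p i := by rw [hcov i i, hqii]
    rw [hcv]
    rcases eq_or_lt_of_le (hp0 i) with h | h
    · have hz : c i * c i * (p i - p i * p i) = 0 := by rw [← h]; ring
      rw [hz]; positivity
    · have hpne : p i ≠ 0 := ne_of_gt h
      have e1 : c i * c i * (p i - p i * p i) = yb i ^ 2 * ((1 - p i) / p i) := by
        simp only [hcdef]; field_simp
      rw [e1]
      have h1 : (1 - p i) / p i ≤ k₂ := by
        refine le_trans ?_ (hk₂ i)
        exact (div_le_div_iff_of_pos_right h).mpr (by linarith)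
      calc yb i ^ 2 * ((1 - p i) / p i) ≤ yb i ^ 2 * k₂ :=
            mul_le_mul_of_nonneg_left h1 (sq_nonneg _)
        _ = k₂ * yb i ^ 2 := mul_comm _ _
  -- bound on the M-part second moment
  have hMint2 : ∀ i j : Fin n, Integrable (fun ω => M i ω * M j ω) P := fun i j =>
    integrable_mul_of_bdd (hMm i).aestronglyMeasurable (hMm j).aestronglyMeasurable
      (Filter.Eventually.of_forall (hMb i)) (Filter.Eventually.of_forall (hMb j))
  have hSM : ∫ ω, (∑ i, M i ω) ^ 2 ∂P
      ≤ k₂ * ∑ i, yb i ^ 2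
        + (k₁ * k₂) ^ 2 * ∑ i, ∑ j ∈ Finset.univ.erase i, |cov P (I i) (I j)| := by
    rw [integral_sum_sq M hMint2]
    rw [show ∑ i, ∑ j, ∫ ω, M i ω * M j ω ∂P
        = ∑ i, (∫ ω, M i ω * M i ω ∂P + ∑ j ∈ Finset.univ.erase i, ∫ ω, M i ω * M j ω ∂P)
      from Finset.sum_congr rfl fun i _ => (Finset.add_sum_erase _ _ (Finset.mem_univ i)).symm]
    have hbound : ∀ i : Fin n,
        ∫ ω, M i ω * M i ω ∂P + ∑ j ∈ Finset.univ.erase i, ∫ ω, M i ω * M j ω ∂P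
        ≤ k₂ * yb i ^ 2 + ∑ j ∈ Finset.univ.erase i, (k₁ * k₂) ^ 2 * |cov P (I i) (I j)| := by
      intro i
      refine add_le_add ?_ (Finset.sum_le_sum fun j _ => ?_)
      · rw [hMij i i]; exact hMdiag i
      · rw [hMij i j]
        calc c i * c j * cov P (I i) (I j) ≤ |c i * c j * cov P (I i) (I j)| := le_abs_self _
          _ = |c i| * |c j| * |cov P (I i) (I j)| := by rw [abs_mul, abs_mul]
          _ ≤ (k₁ * k₂) * (k₁ * k₂) * |cov P (I i) (I j)| := by
              refine mul_le_mul ?_ le_rfl (abs_nonneg _) (by positivity)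
              exact mul_le_mul (hc_abs i) (hc_abs j) (abs_nonneg _) (by positivity)
          _ = (k₁ * k₂) ^ 2 * |cov P (I i) (I j)| := by ring
    calc ∑ i, (∫ ω, M i ω * M i ω ∂P + ∑ j ∈ Finset.univ.erase i, ∫ ω, M i ω * M j ω ∂P)
        ≤ ∑ i, (k₂ * yb i ^ 2 + ∑ j ∈ Finset.univ.erase i, (k₁ * k₂) ^ 2 * |cov P (I i) (I j)|) :=
          Finset.sum_le_sum fun i _ => hbound i
      _ = k₂ * ∑ i, yb i ^ 2
          + (k₁ * k₂) ^ 2 * ∑ i, ∑ j ∈ Finset.univ.erase i, |cov P (I i) (I j)| := by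
          rw [Finset.sum_add_distrib, Finset.mul_sum, Finset.mul_sum]
          congr 1
          exact Finset.sum_congr rfl fun i _ => (Finset.mul_sum _ _ _).symm
  -- diagonal N bound
  have hk1sq : ∀ i, 0 ≤ k₁ ^ 2 - yb i ^ 2 := fun i => by linarith [hyb_sq i]
  have hNdiag : ∀ i, ∫ ω, N i ω * N i ω ∂P ≤ k₂ * (k₁ ^ 2 - yb i ^ 2) := by
    intro i
    rcases eq_or_ne (P (S i)) 0 with h0 | h0
    · have hpz : p i = 0 := by rw [hp' i, h0]; simp
      have hz : ∀ ω, N i ω * N i ω = 0 := by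
        intro ω; simp [hNdef, hpz]
      rw [show (fun ω => N i ω * N i ω) = fun _ => (0:ℝ) from funext hz, integral_const]
      simp only [smul_zero]
      exact mul_nonneg hk₂0 (hk1sq i)
    · haveI := cond_isProbabilityMeasure (μ := P) h0
      have hYc : Integrable (Y i) (P[|S i]) :=
        integrable_of_bdd (hY i).aestronglyMeasurable (ae_cond_of_ae (hbdd i))
      have hY2c : Integrable (fun ω => Y i ω ^ 2) (P[|S i]) := by
        refine integrable_of_bdd (B := k₁ ^ 2) ((hY i).pow_const 2).aestronglyMeasurable ?_
        filter_upwards [ae_cond_of_ae (hbdd i)] with ω hω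
        rw [abs_pow]
        exact pow_le_pow_left₀ (abs_nonneg _) hω 2
      have hVval : ∫ ω, (Y i ω - yb i) ^ 2 ∂(P[|S i])
          = (∫ ω, Y i ω ^ 2 ∂(P[|S i])) - yb i ^ 2 := by
        rw [show (fun ω => (Y i ω - yb i) ^ 2)
            = fun ω => (Y i ω ^ 2 - (2 * yb i) * Y i ω) + yb i ^ 2
            from funext fun ω => by ring]
        rw [integral_add (by exact hY2c.sub (hYc.const_mul _)) (integrable_const _),
          integral_sub hY2c (by exact hYc.const_mul _), integral_const_mul, integral_const,
          ← hyb'' i]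
        simp [measure_univ]
        ring
      have hV0 : 0 ≤ ∫ ω, (Y i ω - yb i) ^ 2 ∂(P[|S i]) := integral_nonneg fun ω => sq_nonneg _
      have hY2le : ∫ ω, Y i ω ^ 2 ∂(P[|S i]) ≤ k₁ ^ 2 := by
        have habs : |∫ ω, Y i ω ^ 2 ∂(P[|S i])| ≤ k₁ ^ 2 := by
          refine abs_integral_le_of_mass_le (B := k₁ ^ 2) (mass_cond_le _) (by positivity) ?_
          filter_upwards [ae_cond_of_ae (hbdd i)] with ω hω
          rw [abs_pow]
          exact pow_le_pow_left₀ (abs_nonneg _) hω 2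
        exact (abs_le.mp habs).2
      have hVle : ∫ ω, (Y i ω - yb i) ^ 2 ∂(P[|S i]) ≤ k₁ ^ 2 - yb i ^ 2 := by
        rw [hVval]; linarith
      have hNsq_pt : ∀ ω, N i ω * N i ω
          = (1 / p i) ^ 2 * (S i).indicator (fun ω => (Y i ω - yb i) ^ 2) ω := by
        intro ω
        by_cases h : d i ω = e <;>
          simp [hNdef, hSdef, Set.indicator_apply, Set.mem_setOf_eq, h] <;> ring
      rw [show (fun ω => N i ω * N i ω)
          = fun ω => (1 / p i) ^ 2 * (S i).indicator (fun ω => (Y i ω - yb i) ^ 2) ω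
          from funext hNsq_pt, integral_const_mul, integral_indicator (hSm i),
        setIntegral_eq_cond, ← hp' i]
      have hfac : (1 / p i) ^ 2 * p i ≤ k₂ := by
        have e2 : (1 / p i) ^ 2 * p i = (1 / p i) * (p i * (1 / p i)) := by ring
        rw [e2]
        calc (1 / p i) * (p i * (1 / p i)) ≤ k₂ * 1 :=
              mul_le_mul (hk₂ i) (hpinv1 i) (mul_nonneg (hp0 i) (hpinv0 i)) hk₂0
          _ = k₂ := mul_one _
      calc (1 / p i) ^ 2 * (p i * ∫ ω, (Y i ω - yb i) ^ 2 ∂(P[|S i]))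
          = ((1 / p i) ^ 2 * p i) * ∫ ω, (Y i ω - yb i) ^ 2 ∂(P[|S i]) := by ring
        _ ≤ k₂ * (k₁ ^ 2 - yb i ^ 2) :=
            mul_le_mul hfac hVle hV0 hk₂0
  -- bounds used off the diagonal
  have hεabs : ∀ i j, |μb i j - yb i| ≤ 2 * k₁ := by
    intro i j
    calc |μb i j - yb i| ≤ |μb i j| + |yb i| := abs_sub _ _
      _ ≤ k₁ + k₁ := add_le_add (hμb_abs i j) (hyb_abs i)
      _ = 2 * k₁ := by ring
  have hUij_abs : ∀ i j : Fin n,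
      |∫ ω, (Y i ω - μb i j) * (Y j ω - μb j i) ∂(P[|S i ∩ S j])| ≤ 4 * k₁ ^ 2 := by
    intro i j
    refine abs_integral_le_of_mass_le (B := 4 * k₁ ^ 2) (mass_cond_le _) (by positivity) ?_
    filter_upwards [ae_cond_of_ae (hbdd i), ae_cond_of_ae (hbdd j)] with ω h1 h2
    rw [abs_mul]
    have b1 : |Y i ω - μb i j| ≤ 2 * k₁ := by
      calc |Y i ω - μb i j| ≤ |Y i ω| + |μb i j| := abs_sub _ _
        _ ≤ k₁ + k₁ := add_le_add h1 (hμb_abs i j)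
        _ = 2 * k₁ := by ring
    have b2 : |Y j ω - μb j i| ≤ 2 * k₁ := by
      calc |Y j ω - μb j i| ≤ |Y j ω| + |μb j i| := abs_sub _ _
        _ ≤ k₁ + k₁ := add_le_add h2 (hμb_abs j i)
        _ = 2 * k₁ := by ring
    calc |Y i ω - μb i j| * |Y j ω - μb j i| ≤ (2 * k₁) * (2 * k₁) :=
          mul_le_mul b1 b2 (abs_nonneg _) (by positivity)
      _ = 4 * k₁ ^ 2 := by ring
  -- off-diagonal N bound
  have hNoff : ∀ i j, i ≠ j → ∫ ω, N i ω * N j ω ∂P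
      ≤ ((μb i j - yb i) * (μb j i - yb j)
          + ∫ ω, (Y i ω - μb i j) * (Y j ω - μb j i) ∂(P[|S i ∩ S j]))
        + 8 * k₁ ^ 2 * k₂ ^ 2 * |cov P (I i) (I j)| := by
    intro i j hij
    have hTpos := hpos' i j hij
    have hT0 : P (S i ∩ S j) ≠ 0 := ne_of_gt hTpos
    haveI := cond_isProbabilityMeasure (μ := P) hT0
    have hpi : 0 < p i := by
      rw [hp' i]
      have hle : P (S i ∩ S j) ≤ P (S i) := measure_mono Set.inter_subset_left
      refine ENNReal.toReal_pos (fun hz => hT0 ?_) (measure_ne_top _ _)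
      rw [hz] at hle
      exact le_antisymm hle (by simp)
    have hpj : 0 < p j := by
      rw [hp' j]
      have hle : P (S i ∩ S j) ≤ P (S j) := measure_mono Set.inter_subset_right
      refine ENNReal.toReal_pos (fun hz => hT0 ?_) (measure_ne_top _ _)
      rw [hz] at hle
      exact le_antisymm hle (by simp)
    have hYci : Integrable (Y i) (P[|S i ∩ S j]) :=
      integrable_of_bdd (hY i).aestronglyMeasurable (ae_cond_of_ae (hbdd i))
    have hYcj : Integrable (Y j) (P[|S i ∩ S j]) :=
      integrable_of_bdd (hY j).aestronglyMeasurable (ae_cond_of_ae (hbdd j))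
    have hprod : Integrable (fun ω => (Y i ω - μb i j) * (Y j ω - μb j i)) (P[|S i ∩ S j]) := by
      refine integrable_mul_of_bdd (Bf := 2 * k₁) (Bg := 2 * k₁) ((hY i).sub_const _).aestronglyMeasurable
        ((hY j).sub_const _).aestronglyMeasurable ?_ ?_
      · filter_upwards [ae_cond_of_ae (hbdd i)] with ω h1
        calc |Y i ω - μb i j| ≤ |Y i ω| + |μb i j| := abs_sub _ _
          _ ≤ k₁ + k₁ := add_le_add h1 (hμb_abs i j)
          _ = 2 * k₁ := by ring
      · filter_upwards [ae_cond_of_ae (hbdd j)] with ω h2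
        calc |Y j ω - μb j i| ≤ |Y j ω| + |μb j i| := abs_sub _ _
          _ ≤ k₁ + k₁ := add_le_add h2 (hμb_abs j i)
          _ = 2 * k₁ := by ring
    have hYiv : ∫ ω, Y i ω ∂(P[|S i ∩ S j]) = μb i j := (hμb' i j).symm
    have hYjv : ∫ ω, Y j ω ∂(P[|S i ∩ S j]) = μb j i := by
      rw [show S i ∩ S j = S j ∩ S i from Set.inter_comm _ _]
      exact (hμb' j i).symm
    have hW : ∫ ω, (Y i ω - yb i) * (Y j ω - yb j) ∂(P[|S i ∩ S j])
        = (μb i j - yb i) * (μb j i - yb j)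
          + ∫ ω, (Y i ω - μb i j) * (Y j ω - μb j i) ∂(P[|S i ∩ S j]) := by
      have ia : Integrable (fun ω => (μb i j - yb i) * (Y j ω - μb j i)) (P[|S i ∩ S j]) := by
        exact (hYcj.sub (integrable_const _)).const_mul _
      have ib : Integrable (fun ω => (μb j i - yb j) * (Y i ω - μb i j)) (P[|S i ∩ S j]) := by
        exact (hYci.sub (integrable_const _)).const_mul _
      rw [show (fun ω => (Y i ω - yb i) * (Y j ω - yb j)) = fun ω =>
          ((Y i ω - μb i j) * (Y j ω - μb j i)
            + (μb i j - yb i) * (Y j ω - μb j i))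
            + ((μb j i - yb j) * (Y i ω - μb i j)
            + (μb i j - yb i) * (μb j i - yb j))
          from funext fun ω => by ring]
      rw [integral_add (by exact hprod.add ia) (by exact ib.add (integrable_const _)),
        integral_add hprod ia, integral_add ib (integrable_const _),
        integral_const_mul, integral_const_mul,
        integral_sub hYcj (integrable_const _), integral_sub hYci (integrable_const _),
        hYiv, hYjv, integral_const, integral_const]
      simp [measure_univ]
      ring
    have hNN_pt : ∀ ω, N i ω * N j ω = ((1 / p i) * (1 / p j)) *
        (S i ∩ S j).indicator (fun ω => (Y i ω - yb i) * (Y j ω - yb j)) ω := by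
      intro ω
      by_cases h1 : d i ω = e <;> by_cases h2 : d j ω = e <;>
        simp [hNdef, hSdef, Set.indicator_apply, Set.mem_setOf_eq, Set.mem_inter_iff, h1, h2] <;>
        ring
    rw [show (fun ω => N i ω * N j ω) = fun ω => ((1 / p i) * (1 / p j)) *
        (S i ∩ S j).indicator (fun ω => (Y i ω - yb i) * (Y j ω - yb j)) ω
        from funext hNN_pt, integral_const_mul,
      integral_indicator ((hSm i).inter (hSm j)), setIntegral_eq_cond, hW]
    have hqq : (P (S i ∩ S j)).toReal = q i j := rfl
    rw [hqq]
    set R := (μb i j - yb i) * (μb j i - yb j)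
      + ∫ ω, (Y i ω - μb i j) * (Y j ω - μb j i) ∂(P[|S i ∩ S j]) with hRdef
    have hRabs : |R| ≤ 8 * k₁ ^ 2 := by
      rw [hRdef]
      calc |(μb i j - yb i) * (μb j i - yb j)
            + ∫ ω, (Y i ω - μb i j) * (Y j ω - μb j i) ∂(P[|S i ∩ S j])|
          ≤ |(μb i j - yb i) * (μb j i - yb j)|
            + |∫ ω, (Y i ω - μb i j) * (Y j ω - μb j i) ∂(P[|S i ∩ S j])| := abs_add_le _ _
        _ ≤ 4 * k₁ ^ 2 + 4 * k₁ ^ 2 := by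
            refine add_le_add ?_ (hUij_abs i j)
            rw [abs_mul]
            calc |μb i j - yb i| * |μb j i - yb j| ≤ (2 * k₁) * (2 * k₁) :=
                  mul_le_mul (hεabs i j) (hεabs j i) (abs_nonneg _) (by positivity)
              _ = 4 * k₁ ^ 2 := by ring
        _ = 8 * k₁ ^ 2 := by ring
    have hqcov : q i j = cov P (I i) (I j) + p i * p j := by rw [hcov i j]; ring
    have hkey : (1 / p i) * (1 / p j) * (q i j * R)
        = R + (cov P (I i) (I j) * ((1 / p i) * (1 / p j))) * R := by
      rw [hqcov]
      field_simp
      ring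
    rw [hkey]
    have hrem : (cov P (I i) (I j) * ((1 / p i) * (1 / p j))) * R
        ≤ 8 * k₁ ^ 2 * k₂ ^ 2 * |cov P (I i) (I j)| := by
      have hx0 : 0 ≤ (1 / p i) * (1 / p j) := mul_nonneg (hpinv0 i) (hpinv0 j)
      have hxk : (1 / p i) * (1 / p j) ≤ k₂ * k₂ :=
        mul_le_mul (hk₂ i) (hk₂ j) (hpinv0 j) hk₂0
      calc (cov P (I i) (I j) * ((1 / p i) * (1 / p j))) * R
          ≤ |(cov P (I i) (I j) * ((1 / p i) * (1 / p j))) * R| := le_abs_self _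
        _ = |cov P (I i) (I j)| * ((1 / p i) * (1 / p j)) * |R| := by
            rw [abs_mul, abs_mul, abs_of_nonneg hx0]
        _ ≤ |cov P (I i) (I j)| * (k₂ * k₂) * (8 * k₁ ^ 2) := by
            refine mul_le_mul ?_ hRabs (abs_nonneg _)
              (mul_nonneg (abs_nonneg _) (mul_nonneg hk₂0 hk₂0))
            exact mul_le_mul_of_nonneg_left hxk (abs_nonneg _)
        _ = 8 * k₁ ^ 2 * k₂ ^ 2 * |cov P (I i) (I j)| := by ring
    linarith
  -- assembling the N-part bound
  have hNint2 : ∀ i j : Fin n, Integrable (fun ω => N i ω * N j ω) P := fun i j =>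
    integrable_mul_of_bdd (hNm i).aestronglyMeasurable (hNm j).aestronglyMeasurable
      (hNb i) (hNb j)
  have hnR : (0:ℝ) < (n:ℝ) := Nat.cast_pos.mpr hn
  have hn2 : ((n:ℝ)) ^ 2 ≠ 0 := by positivity
  have hC' : (n:ℝ) ^ 2 * C = ∑ i, ∑ j ∈ Finset.univ.erase i, |cov P (I i) (I j)| := by
    rw [hC, ← mul_assoc, mul_one_div, div_self hn2, one_mul]
  have hE' : (n:ℝ) ^ 2 * E
      = ∑ i, ∑ j ∈ Finset.univ.erase i, (μb i j - yb i) * (μb j i - yb j) := by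
    rw [hE, ← mul_assoc, mul_one_div, div_self hn2, one_mul]
  have hU' : (n:ℝ) ^ 2 * U = ∑ i, ∑ j ∈ Finset.univ.erase i,
      ∫ ω, (Y i ω - μb i j) * (Y j ω - μb j i) ∂(P[|S i ∩ S j]) := by
    rw [hU, ← mul_assoc, mul_one_div, div_self hn2, one_mul]
  have hCnn : 0 ≤ ∑ i, ∑ j ∈ Finset.univ.erase i, |cov P (I i) (I j)| :=
    Finset.sum_nonneg fun i _ => Finset.sum_nonneg fun j _ => abs_nonneg _
  have hC0 : 0 ≤ C := by
    have h := hCnn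
    rw [← hC'] at h
    by_contra hcon
    push_neg at hcon
    have hneg : (n:ℝ) ^ 2 * C < 0 := mul_neg_of_pos_of_neg (by positivity) hcon
    linarith
  have hybsum : ∑ i, yb i ^ 2 ≤ (n:ℝ) * k₁ ^ 2 := by
    calc ∑ i, yb i ^ 2 ≤ ∑ _i : Fin n, k₁ ^ 2 := Finset.sum_le_sum fun i _ => hyb_sq i
      _ = (n:ℝ) * k₁ ^ 2 := by
          simp only [Finset.sum_const, Finset.card_univ, Fintype.card_fin, nsmul_eq_mul]
  have hybsum0 : 0 ≤ ∑ i, yb i ^ 2 := Finset.sum_nonneg fun i _ => sq_nonneg _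
  have hSN : ∫ ω, (∑ i, N i ω) ^ 2 ∂P
      ≤ k₂ * ((n:ℝ) * k₁ ^ 2 - ∑ i, yb i ^ 2) + (n:ℝ) ^ 2 * E + (n:ℝ) ^ 2 * U
        + 8 * k₁ ^ 2 * k₂ ^ 2 * ((n:ℝ) ^ 2 * C) := by
    rw [integral_sum_sq N hNint2]
    rw [show ∑ i, ∑ j, ∫ ω, N i ω * N j ω ∂P
        = ∑ i, (∫ ω, N i ω * N i ω ∂P + ∑ j ∈ Finset.univ.erase i, ∫ ω, N i ω * N j ω ∂P)
      from Finset.sum_congr rfl fun i _ => (Finset.add_sum_erase _ _ (Finset.mem_univ i)).symm]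
    have step1 : ∑ i, (∫ ω, N i ω * N i ω ∂P + ∑ j ∈ Finset.univ.erase i, ∫ ω, N i ω * N j ω ∂P)
        ≤ ∑ i, (k₂ * (k₁ ^ 2 - yb i ^ 2) + ∑ j ∈ Finset.univ.erase i,
          (((μb i j - yb i) * (μb j i - yb j)
            + ∫ ω, (Y i ω - μb i j) * (Y j ω - μb j i) ∂(P[|S i ∩ S j]))
           + 8 * k₁ ^ 2 * k₂ ^ 2 * |cov P (I i) (I j)|)) :=
      Finset.sum_le_sum fun i _ => add_le_add (hNdiag i)
        (Finset.sum_le_sum fun j hj => hNoff i j (Finset.ne_of_mem_erase hj).symm)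
    refine le_trans step1 ?_
    have expand : ∑ i, (k₂ * (k₁ ^ 2 - yb i ^ 2) + ∑ j ∈ Finset.univ.erase i,
          (((μb i j - yb i) * (μb j i - yb j)
            + ∫ ω, (Y i ω - μb i j) * (Y j ω - μb j i) ∂(P[|S i ∩ S j]))
           + 8 * k₁ ^ 2 * k₂ ^ 2 * |cov P (I i) (I j)|))
        = k₂ * ((n:ℝ) * k₁ ^ 2 - ∑ i, yb i ^ 2)
          + (∑ i, ∑ j ∈ Finset.univ.erase i, (μb i j - yb i) * (μb j i - yb j))
          + (∑ i, ∑ j ∈ Finset.univ.erase i,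
              ∫ ω, (Y i ω - μb i j) * (Y j ω - μb j i) ∂(P[|S i ∩ S j]))
          + 8 * k₁ ^ 2 * k₂ ^ 2
            * ∑ i, ∑ j ∈ Finset.univ.erase i, |cov P (I i) (I j)| := by
      simp only [Finset.sum_add_distrib, ← Finset.mul_sum, mul_sub, Finset.sum_sub_distrib,
        Finset.sum_const, Finset.card_univ, Fintype.card_fin, nsmul_eq_mul]
      ring
    rw [expand, hE', hU', hC']
  -- square-root bounds for each part
  have hE0 : (0:ℝ) ≤ max E 0 := le_max_right _ _
  have hU0 : (0:ℝ) ≤ max U 0 := le_max_right _ _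
  have hsqrtSM : Real.sqrt (∫ ω, (∑ i, M i ω) ^ 2 ∂P)
      ≤ Real.sqrt (k₂ * ∑ i, yb i ^ 2) + k₁ * k₂ * (n:ℝ) * Real.sqrt C := by
    have h1 : (k₁ * k₂) ^ 2 * (∑ i, ∑ j ∈ Finset.univ.erase i, |cov P (I i) (I j)|)
        = (k₁ * k₂ * (n:ℝ)) ^ 2 * C := by rw [← hC']; ring
    have h2 : ∫ ω, (∑ i, M i ω) ^ 2 ∂P
        ≤ k₂ * ∑ i, yb i ^ 2 + (k₁ * k₂ * (n:ℝ)) ^ 2 * C := by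
      rw [← h1]; exact hSM
    calc Real.sqrt (∫ ω, (∑ i, M i ω) ^ 2 ∂P)
        ≤ Real.sqrt (k₂ * ∑ i, yb i ^ 2 + (k₁ * k₂ * (n:ℝ)) ^ 2 * C) := Real.sqrt_le_sqrt h2
      _ ≤ Real.sqrt (k₂ * ∑ i, yb i ^ 2) + Real.sqrt ((k₁ * k₂ * (n:ℝ)) ^ 2 * C) :=
          my_sqrt_add (mul_nonneg hk₂0 hybsum0) (mul_nonneg (sq_nonneg _) hC0)
      _ = Real.sqrt (k₂ * ∑ i, yb i ^ 2) + k₁ * k₂ * (n:ℝ) * Real.sqrt C := by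
          rw [Real.sqrt_mul (sq_nonneg _), Real.sqrt_sq (by positivity)]
  have hsqrtSN : Real.sqrt (∫ ω, (∑ i, N i ω) ^ 2 ∂P)
      ≤ Real.sqrt (k₂ * ((n:ℝ) * k₁ ^ 2 - ∑ i, yb i ^ 2))
        + (n:ℝ) * Real.sqrt (max E 0) + (n:ℝ) * Real.sqrt (max U 0)
        + 3 * (k₁ * k₂) * (n:ℝ) * Real.sqrt C := by
    have hb : ∫ ω, (∑ i, N i ω) ^ 2 ∂P
        ≤ k₂ * ((n:ℝ) * k₁ ^ 2 - ∑ i, yb i ^ 2) + (n:ℝ) ^ 2 * max E 0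
          + ((n:ℝ) ^ 2 * max U 0 + (3 * (k₁ * k₂) * (n:ℝ)) ^ 2 * C) := by
      have h1 : (n:ℝ) ^ 2 * E ≤ (n:ℝ) ^ 2 * max E 0 :=
        mul_le_mul_of_nonneg_left (le_max_left _ _) (sq_nonneg _)
      have h2 : (n:ℝ) ^ 2 * U ≤ (n:ℝ) ^ 2 * max U 0 :=
        mul_le_mul_of_nonneg_left (le_max_left _ _) (sq_nonneg _)
      have h3 : 8 * k₁ ^ 2 * k₂ ^ 2 * ((n:ℝ) ^ 2 * C) ≤ (3 * (k₁ * k₂) * (n:ℝ)) ^ 2 * C := by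
        have ht : 0 ≤ k₁ ^ 2 * k₂ ^ 2 * ((n:ℝ) ^ 2 * C) :=
          mul_nonneg (mul_nonneg (sq_nonneg _) (sq_nonneg _))
            (mul_nonneg (sq_nonneg _) hC0)
        nlinarith [ht]
      linarith [hSN]
    have hD0 : 0 ≤ k₂ * ((n:ℝ) * k₁ ^ 2 - ∑ i, yb i ^ 2) :=
      mul_nonneg hk₂0 (by linarith [hybsum])
    calc Real.sqrt (∫ ω, (∑ i, N i ω) ^ 2 ∂P)
        ≤ Real.sqrt (k₂ * ((n:ℝ) * k₁ ^ 2 - ∑ i, yb i ^ 2) + (n:ℝ) ^ 2 * max E 0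
            + ((n:ℝ) ^ 2 * max U 0 + (3 * (k₁ * k₂) * (n:ℝ)) ^ 2 * C)) := Real.sqrt_le_sqrt hb
      _ ≤ Real.sqrt (k₂ * ((n:ℝ) * k₁ ^ 2 - ∑ i, yb i ^ 2) + (n:ℝ) ^ 2 * max E 0)
          + Real.sqrt ((n:ℝ) ^ 2 * max U 0 + (3 * (k₁ * k₂) * (n:ℝ)) ^ 2 * C) :=
          my_sqrt_add (by positivity) (by positivity)
      _ ≤ (Real.sqrt (k₂ * ((n:ℝ) * k₁ ^ 2 - ∑ i, yb i ^ 2)) + Real.sqrt ((n:ℝ) ^ 2 * max E 0))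
          + (Real.sqrt ((n:ℝ) ^ 2 * max U 0) + Real.sqrt ((3 * (k₁ * k₂) * (n:ℝ)) ^ 2 * C)) :=
          add_le_add (my_sqrt_add hD0 (by positivity)) (my_sqrt_add (by positivity)
            (mul_nonneg (sq_nonneg _) hC0))
      _ = Real.sqrt (k₂ * ((n:ℝ) * k₁ ^ 2 - ∑ i, yb i ^ 2))
          + (n:ℝ) * Real.sqrt (max E 0) + (n:ℝ) * Real.sqrt (max U 0)
          + 3 * (k₁ * k₂) * (n:ℝ) * Real.sqrt C := by
          rw [Real.sqrt_mul (sq_nonneg ((n:ℝ))) (max E 0), Real.sqrt_sq hnR.le,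
            Real.sqrt_mul (sq_nonneg ((n:ℝ))) (max U 0), Real.sqrt_sq hnR.le,
            Real.sqrt_mul (sq_nonneg _) C, Real.sqrt_sq (by positivity)]
          ring
  -- top-level combination
  have hMN : ∀ (i : Fin n) (ω : Ω), M i ω + N i ω
      = (if d i ω = e then Y i ω else 0) / p i - yb i := by
    intro i ω
    by_cases h : d i ω = e
    · simp only [hMdef, hNdef, hcdef, hIdef, if_pos h, mul_one, div_eq_mul_inv, one_mul]
      ring
    · simp [hMdef, hNdef, hcdef, hIdef, if_neg h]
  have hSMm : Measurable (fun ω => ∑ i, M i ω) := Finset.measurable_sum _ fun i _ => hMm i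
  have hSNm : Measurable (fun ω => ∑ i, N i ω) := Finset.measurable_sum _ fun i _ => hNm i
  have hSMb : ∀ ω, |∑ i, M i ω| ≤ (n:ℝ) * (k₁ * k₂ + k₁) := by
    intro ω
    calc |∑ i, M i ω| ≤ ∑ i, |M i ω| := Finset.abs_sum_le_sum_abs _ _
      _ ≤ ∑ _i : Fin n, (k₁ * k₂ + k₁) := Finset.sum_le_sum fun i _ => hMb i ω
      _ = (n:ℝ) * (k₁ * k₂ + k₁) := by
          simp only [Finset.sum_const, Finset.card_univ, Fintype.card_fin, nsmul_eq_mul]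
  have hSNb : ∀ᵐ ω ∂P, |∑ i, N i ω| ≤ (n:ℝ) * (k₂ * (2 * k₁)) := by
    filter_upwards [(ae_all_iff).mpr hNb] with ω hω
    calc |∑ i, N i ω| ≤ ∑ i, |N i ω| := Finset.abs_sum_le_sum_abs _ _
      _ ≤ ∑ _i : Fin n, (k₂ * (2 * k₁)) := Finset.sum_le_sum fun i _ => hω i
      _ = (n:ℝ) * (k₂ * (2 * k₁)) := by
          simp only [Finset.sum_const, Finset.card_univ, Fintype.card_fin, nsmul_eq_mul]
  have hSM2 : Integrable (fun ω => (∑ i, M i ω) ^ 2) P := by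
    have h := integrable_mul_of_bdd hSMm.aestronglyMeasurable hSMm.aestronglyMeasurable
      (ae_of_all P hSMb) (ae_of_all P hSMb)
    simpa [pow_two] using h
  have hSN2 : Integrable (fun ω => (∑ i, N i ω) ^ 2) P := by
    have h := integrable_mul_of_bdd hSNm.aestronglyMeasurable hSNm.aestronglyMeasurable
      hSNb hSNb
    simpa [pow_two] using h
  have hSMN : Integrable (fun ω => (∑ i, M i ω) * (∑ i, N i ω)) P :=
    integrable_mul_of_bdd hSMm.aestronglyMeasurable hSNm.aestronglyMeasurable
      (ae_of_all P hSMb) hSNb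
  have hGsum : (fun ω => ((1 / (n:ℝ)) * ∑ i,
        ((if d i ω = e then Y i ω else 0) / p i - yb i)) ^ 2)
      = fun ω => (1 / (n:ℝ)) ^ 2 * (∑ i, M i ω + ∑ i, N i ω) ^ 2 := by
    funext ω
    rw [← Finset.sum_add_distrib,
      show ∑ i, (M i ω + N i ω) = ∑ i, ((if d i ω = e then Y i ω else 0) / p i - yb i) from
        Finset.sum_congr rfl fun i _ => hMN i ω]
    ring
  rw [hGsum, integral_const_mul, Real.sqrt_mul (by positivity), Real.sqrt_sq (by positivity)]
  have htr : Real.sqrt (∫ ω, (∑ i, M i ω + ∑ i, N i ω) ^ 2 ∂P)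
      ≤ Real.sqrt (∫ ω, (∑ i, M i ω) ^ 2 ∂P) + Real.sqrt (∫ ω, (∑ i, N i ω) ^ 2 ∂P) :=
    L2_triangle hSM2 hSN2 hSMN
  have hdiagjoin : Real.sqrt (k₂ * ∑ i, yb i ^ 2)
        + Real.sqrt (k₂ * ((n:ℝ) * k₁ ^ 2 - ∑ i, yb i ^ 2))
      ≤ Real.sqrt 2 * (k₁ * Real.sqrt ((n:ℝ) * k₂)) := by
    calc Real.sqrt (k₂ * ∑ i, yb i ^ 2) + Real.sqrt (k₂ * ((n:ℝ) * k₁ ^ 2 - ∑ i, yb i ^ 2))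
        ≤ Real.sqrt 2 * Real.sqrt (k₂ * ∑ i, yb i ^ 2
            + k₂ * ((n:ℝ) * k₁ ^ 2 - ∑ i, yb i ^ 2)) :=
          my_sqrt_two_mul (mul_nonneg hk₂0 hybsum0) (mul_nonneg hk₂0 (by linarith [hybsum]))
      _ = Real.sqrt 2 * (k₁ * Real.sqrt ((n:ℝ) * k₂)) := by
          rw [show k₂ * ∑ i, yb i ^ 2 + k₂ * ((n:ℝ) * k₁ ^ 2 - ∑ i, yb i ^ 2)
              = k₁ ^ 2 * ((n:ℝ) * k₂) from by ring,
            Real.sqrt_mul (sq_nonneg k₁), Real.sqrt_sq hk₁]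
  have htotal : Real.sqrt (∫ ω, (∑ i, M i ω + ∑ i, N i ω) ^ 2 ∂P)
      ≤ Real.sqrt 2 * (k₁ * Real.sqrt ((n:ℝ) * k₂)) + 4 * (k₁ * k₂) * (n:ℝ) * Real.sqrt C
        + (n:ℝ) * Real.sqrt (max E 0) + (n:ℝ) * Real.sqrt (max U 0) := by
    have h4 : k₁ * k₂ * (n:ℝ) * Real.sqrt C + 3 * (k₁ * k₂) * (n:ℝ) * Real.sqrt C
        = 4 * (k₁ * k₂) * (n:ℝ) * Real.sqrt C := by ring
    linarith [htr, hsqrtSM, hsqrtSN, hdiagjoin]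
  have hsq : Real.sqrt ((n:ℝ) * k₂) / (n:ℝ) = Real.sqrt (k₂ / (n:ℝ)) := by
    have h1 : k₂ / (n:ℝ) = ((n:ℝ) * k₂) / ((n:ℝ) ^ 2) := by
      field_simp
    rw [h1, Real.sqrt_div (mul_nonneg hnR.le hk₂0), Real.sqrt_sq hnR.le]
  calc (1 / (n:ℝ)) * Real.sqrt (∫ ω, (∑ i, M i ω + ∑ i, N i ω) ^ 2 ∂P)
      ≤ (1 / (n:ℝ)) * (Real.sqrt 2 * (k₁ * Real.sqrt ((n:ℝ) * k₂))
          + 4 * (k₁ * k₂) * (n:ℝ) * Real.sqrt C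
          + (n:ℝ) * Real.sqrt (max E 0) + (n:ℝ) * Real.sqrt (max U 0)) :=
        mul_le_mul_of_nonneg_left htotal (by positivity)
    _ = Real.sqrt 2 * k₁ * (Real.sqrt ((n:ℝ) * k₂) / (n:ℝ)) + 4 * (k₁ * k₂) * Real.sqrt C
        + Real.sqrt (max E 0) + Real.sqrt (max U 0) := by
        field_simp
    _ = Real.sqrt 2 * k₁ * Real.sqrt (k₂ / (n:ℝ)) + 4 * (k₁ * k₂) * Real.sqrt C
        + Real.sqrt (max E 0) + Real.sqrt (max U 0) := by rw [hsq]

end Key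


set_option maxHeartbeats 2000000 in
/-- Root-mean-square-error bound for the Horvitz–Thompson estimator:
`√E[(τ̂ − τ̄)²] ≤ 3k₁√(k₂/n) + 5k₁k₂(√C(a) + √C(b))
  + 2(√[E(a)]⁺ + √[E(b)]⁺ + √[U(a)]⁺ + √[U(b)]⁺)`. -/
theorem rmse_horvitz_thompson_le
    {Ω : Type*} [MeasurableSpace Ω] (P : Measure Ω) [IsProbabilityMeasure P]
    {Δ : Type*} [Fintype Δ] [DecidableEq Δ] [MeasurableSpace Δ] [MeasurableSingletonClass Δ]
    (n : ℕ) (d : Fin n → Ω → Δ) (Y : Fin n → Ω → ℝ)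
    (hd : ∀ i, Measurable (d i)) (hY : ∀ i, Measurable (Y i))
    (k₁ k₂ : ℝ) (hbdd : ∀ i, ∀ᵐ ω ∂P, |Y i ω| ≤ k₁)
    (a b : Δ)
    -- assignment probabilities `pᵢ(e) = P(dᵢ = e)`
    (p : Fin n → Δ → ℝ) (hp : ∀ i e, p i e = (P {ω | d i ω = e}).toReal)
    -- bounded inverse assignment probabilities for the exposures `a` and `b`
    (hk₂ : ∀ i, ∀ e ∈ ({a, b} : Set Δ), 1 / p i e ≤ k₂)
    -- joint positivity for the exposures `a` and `b`
    (hpos : ∀ i j : Fin n, i ≠ j → ∀ e ∈ ({a, b} : Set Δ),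
      0 < P ({ω | d i ω = e} ∩ {ω | d j ω = e}))
    -- conditional expected outcomes `ȳᵢ(e) = E[Yᵢ | dᵢ = e]` (zero for null events)
    (ybar : Fin n → Δ → ℝ)
    (hybar : ∀ i e, ybar i e = ∫ ω, Y i ω ∂(P[|{ω | d i ω = e}]))
    -- pairwise conditional means `μ̄ᵢⱼ(e₁,e₂) = E[Yᵢ | dᵢ = e₁, dⱼ = e₂]`
    (μbar : Fin n → Fin n → Δ → Δ → ℝ)
    (hμbar : ∀ i j e₁ e₂,
      μbar i j e₁ e₂ = ∫ ω, Y i ω ∂(P[|{ω | d i ω = e₁} ∩ {ω | d j ω = e₂}]))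
    -- systematic part of the error: `ε̃ᵢⱼ(e₁,e₂) = μ̄ᵢⱼ(e₁,e₂) − ȳᵢ(e₁)`
    (εtilde : Fin n → Fin n → Δ → Δ → ℝ)
    (hεtilde : ∀ i j e₁ e₂, εtilde i j e₁ e₂ = μbar i j e₁ e₂ - ybar i e₁)
    -- idiosyncratic part of the error: `ε̇ᵢⱼ = Yᵢ − μ̄ᵢⱼ(dᵢ, dⱼ)`
    (εdot : Fin n → Fin n → Ω → ℝ)
    (hεdot : ∀ i j ω, εdot i j ω = Y i ω - μbar i j (d i ω) (d j ω))
    -- the design-dependence term `C(e)`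
    (Cdep : Δ → ℝ)
    (hCdep : ∀ e, Cdep e = (1 / (n : ℝ) ^ 2) * ∑ i, ∑ j ∈ Finset.univ.erase i,
      |cov P (fun ω => if d i ω = e then (1 : ℝ) else 0)
        (fun ω => if d j ω = e then (1 : ℝ) else 0)|)
    -- the correlated-error term `E(e)`
    (Edep : Δ → ℝ)
    (hEdep : ∀ e, Edep e = (1 / (n : ℝ) ^ 2) * ∑ i, ∑ j ∈ Finset.univ.erase i,
      εtilde i j e e * εtilde j i e e)
    -- the unit-error term `U(e)`
    (Udep : Δ → ℝ)
    (hUdep : ∀ e, Udep e = (1 / (n : ℝ) ^ 2) * ∑ i, ∑ j ∈ Finset.univ.erase i,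
      condCov P ({ω | d i ω = e} ∩ {ω | d j ω = e}) (εdot i j) (εdot j i))
    -- the estimand `τ̄ = (1/n)Σᵢ (ȳᵢ(a) − ȳᵢ(b))`
    (τbar : ℝ) (hτbar : τbar = (1 / (n : ℝ)) * ∑ i, (ybar i a - ybar i b))
    -- the Horvitz–Thompson estimator
    (τhat : Ω → ℝ)
    (hτhat : ∀ ω, τhat ω = (1 / (n : ℝ)) * ∑ i,
      ((if d i ω = a then Y i ω else 0) / p i a - (if d i ω = b then Y i ω else 0) / p i b)) :
    Real.sqrt (∫ ω, (τhat ω - τbar) ^ 2 ∂P)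
      ≤ 3 * k₁ * Real.sqrt (k₂ / n)
        + 5 * k₁ * k₂ * (Real.sqrt (Cdep a) + Real.sqrt (Cdep b))
        + 2 * (Real.sqrt (max (Edep a) 0) + Real.sqrt (max (Edep b) 0)
            + Real.sqrt (max (Udep a) 0) + Real.sqrt (max (Udep b) 0)) := by
  have hamem : a ∈ ({a, b} : Set Δ) := Set.mem_insert _ _
  have hbmem : b ∈ ({a, b} : Set Δ) := Set.mem_insert_of_mem _ rfl
  rcases Nat.eq_zero_or_pos n with hn0 | hn
  · -- degenerate case n = 0
    subst hn0
    have hz : ∀ ω, τhat ω - τbar = 0 := by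
      intro ω; rw [hτhat ω, hτbar]; simp
    rw [show (fun ω => (τhat ω - τbar) ^ 2) = fun _ => (0 : ℝ) from
      funext fun ω => by rw [hz ω]; norm_num]
    rw [integral_const]
    have hCz : ∀ e, Cdep e = 0 := fun e => by rw [hCdep]; simp
    have hEz : ∀ e, Edep e = 0 := fun e => by rw [hEdep]; simp
    have hUz : ∀ e, Udep e = 0 := fun e => by rw [hUdep]; simp
    rw [hCz a, hCz b, hEz a, hEz b, hUz a, hUz b]
    norm_num
  -- probability facts
  have hk₁0 : 0 ≤ k₁ := by
    have hne : (ae P).NeBot := ae_neBot.mpr (IsProbabilityMeasure.ne_zero P)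
    obtain ⟨ω, hω⟩ := (hbdd ⟨0, hn⟩).exists
    exact le_trans (abs_nonneg _) hω
  have hk₂0 : 0 ≤ k₂ := by
    refine le_trans ?_ (hk₂ ⟨0, hn⟩ a hamem)
    refine one_div_nonneg.mpr ?_
    rw [hp]
    exact ENNReal.toReal_nonneg
  by_cases hab : a = b
  · -- degenerate case a = b
    subst hab
    have hz : ∀ ω, τhat ω - τbar = 0 := by
      intro ω; rw [hτhat ω, hτbar]; simp
    rw [show (fun ω => (τhat ω - τbar) ^ 2) = fun _ => (0 : ℝ) from
      funext fun ω => by rw [hz ω]; norm_num]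
    rw [integral_const]
    simp only [smul_zero, Real.sqrt_zero]
    have h1 : 0 ≤ 3 * k₁ * Real.sqrt (k₂ / (n:ℝ)) := by positivity
    have h2 : 0 ≤ 5 * k₁ * k₂ * (Real.sqrt (Cdep a) + Real.sqrt (Cdep a)) := by
      refine mul_nonneg (by positivity) ?_
      positivity
    have h3 : 0 ≤ 2 * (Real.sqrt (max (Edep a) 0) + Real.sqrt (max (Edep a) 0)
        + Real.sqrt (max (Udep a) 0) + Real.sqrt (max (Udep a) 0)) := by positivity
    linarith
  -- main case: apply the key lemma to each exposure
  -- translation of U for each admissible exposure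
  have hcondCov : ∀ e ∈ ({a, b} : Set Δ), ∀ i j : Fin n, i ≠ j →
      condCov P ({ω | d i ω = e} ∩ {ω | d j ω = e}) (εdot i j) (εdot j i)
        = ∫ ω, (Y i ω - μbar i j e e) * (Y j ω - μbar j i e e)
            ∂(P[|{ω | d i ω = e} ∩ {ω | d j ω = e}]) := by
    intro e he i j hij
    have hT0 : P ({ω | d i ω = e} ∩ {ω | d j ω = e}) ≠ 0 := ne_of_gt (hpos i j hij e he)
    haveI := cond_isProbabilityMeasure (μ := P) hT0
    have hTm : MeasurableSet ({ω | d i ω = e} ∩ {ω | d j ω = e}) :=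
      ((hd i) (measurableSet_singleton e)).inter ((hd j) (measurableSet_singleton e))
    have hae_i : ∀ᵐ ω ∂(P[|{ω | d i ω = e} ∩ {ω | d j ω = e}]),
        εdot i j ω = Y i ω - μbar i j e e := by
      filter_upwards [_root_.ae_cond_mem hTm] with ω hωT
      obtain ⟨h1, h2⟩ := hωT
      rw [hεdot, show d i ω = e from h1, show d j ω = e from h2]
    have hae_j : ∀ᵐ ω ∂(P[|{ω | d i ω = e} ∩ {ω | d j ω = e}]),
        εdot j i ω = Y j ω - μbar j i e e := by
      filter_upwards [_root_.ae_cond_mem hTm] with ω hωT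
      obtain ⟨h1, h2⟩ := hωT
      rw [hεdot, show d i ω = e from h1, show d j ω = e from h2]
    have hae_prod : ∀ᵐ ω ∂(P[|{ω | d i ω = e} ∩ {ω | d j ω = e}]),
        εdot i j ω * εdot j i ω
          = (Y i ω - μbar i j e e) * (Y j ω - μbar j i e e) := by
      filter_upwards [hae_i, hae_j] with ω h1 h2
      rw [h1, h2]
    have hz1 : ∫ ω, εdot i j ω ∂(P[|{ω | d i ω = e} ∩ {ω | d j ω = e}]) = 0 := by
      rw [integral_congr_ae hae_i,
        integral_sub (integrable_of_bdd (B := k₁) (hY i).aestronglyMeasurable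
          (ae_cond_of_ae (hbdd i))) (integrable_const _), integral_const]
      simp only [probReal_univ, smul_eq_mul, one_mul]
      rw [← hμbar i j e e]
      ring
    have hz2 : ∫ ω, εdot j i ω ∂(P[|{ω | d i ω = e} ∩ {ω | d j ω = e}]) = 0 := by
      rw [integral_congr_ae hae_j,
        integral_sub (integrable_of_bdd (B := k₁) (hY j).aestronglyMeasurable
          (ae_cond_of_ae (hbdd j))) (integrable_const _), integral_const]
      simp only [probReal_univ, smul_eq_mul, one_mul]
      rw [show {ω | d i ω = e} ∩ {ω | d j ω = e} = {ω | d j ω = e} ∩ {ω | d i ω = e} from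
        Set.inter_comm _ _, ← hμbar j i e e]
      ring
    show (∫ ω, εdot i j ω * εdot j i ω ∂(P[|{ω | d i ω = e} ∩ {ω | d j ω = e}]))
        - (∫ ω, εdot i j ω ∂(P[|{ω | d i ω = e} ∩ {ω | d j ω = e}]))
          * ∫ ω, εdot j i ω ∂(P[|{ω | d i ω = e} ∩ {ω | d j ω = e}]) = _
    rw [hz1, hz2, integral_congr_ae hae_prod]
    ring
  -- the two Horvitz–Thompson processes
  have hKa := key_exposure P hn d Y hd hY hk₁0 hbdd a (fun i => p i a) (fun i => hp i a)
    (fun i => hk₂ i a hamem) (fun i j hij => hpos i j hij a hamem)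
    (fun i => ybar i a) (fun i => hybar i a)
    (fun i j => μbar i j a a) (fun i j => hμbar i j a a)
    (Cdep a) (Edep a) (Udep a) (hCdep a)
    (by
      rw [hEdep a]
      congr 1
      exact Finset.sum_congr rfl fun i _ => Finset.sum_congr rfl fun j _ => by
        rw [hεtilde, hεtilde])
    (by
      rw [hUdep a]
      congr 1
      exact Finset.sum_congr rfl fun i _ => Finset.sum_congr rfl fun j hj =>
        hcondCov a hamem i j (Finset.ne_of_mem_erase hj).symm)
  have hKb := key_exposure P hn d Y hd hY hk₁0 hbdd b (fun i => p i b) (fun i => hp i b)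
    (fun i => hk₂ i b hbmem) (fun i j hij => hpos i j hij b hbmem)
    (fun i => ybar i b) (fun i => hybar i b)
    (fun i j => μbar i j b b) (fun i j => hμbar i j b b)
    (Cdep b) (Edep b) (Udep b) (hCdep b)
    (by
      rw [hEdep b]
      congr 1
      exact Finset.sum_congr rfl fun i _ => Finset.sum_congr rfl fun j _ => by
        rw [hεtilde, hεtilde])
    (by
      rw [hUdep b]
      congr 1
      exact Finset.sum_congr rfl fun i _ => Finset.sum_congr rfl fun j hj =>
        hcondCov b hbmem i j (Finset.ne_of_mem_erase hj).symm)
  -- pointwise decomposition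
  have hpt : ∀ ω, τhat ω - τbar
      = ((1 / (n : ℝ)) * ∑ i, ((if d i ω = a then Y i ω else 0) / p i a - ybar i a))
        + -((1 / (n : ℝ)) * ∑ i, ((if d i ω = b then Y i ω else 0) / p i b - ybar i b)) := by
    intro ω
    rw [hτhat ω, hτbar]
    simp only [Finset.sum_sub_distrib]
    ring
  -- measurability and bounds of each process
  have hybabs : ∀ (i : Fin n) (e : Δ), |ybar i e| ≤ k₁ := by
    intro i e
    rw [hybar i e]
    exact abs_integral_le_of_mass_le (mass_cond_le _) hk₁0 (ae_cond_of_ae (hbdd i))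
  have hGm : ∀ e : Δ, Measurable (fun ω =>
      (1 / (n : ℝ)) * ∑ i, ((if d i ω = e then Y i ω else 0) / p i e - ybar i e)) := by
    intro e
    refine measurable_const.mul (Finset.measurable_sum _ fun i _ => ?_)
    exact ((Measurable.ite ((hd i) (measurableSet_singleton e)) (hY i)
      measurable_const).div_const _).sub measurable_const
  have hGb : ∀ e : Δ, (∀ i : Fin n, 1 / p i e ≤ k₂) → ∀ᵐ ω ∂P,
      |(1 / (n : ℝ)) * ∑ i, ((if d i ω = e then Y i ω else 0) / p i e - ybar i e)|
        ≤ k₁ * k₂ + k₁ := by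
    intro e hke
    filter_upwards [ae_all_iff.mpr hbdd] with ω hω
    have hterm : ∀ i : Fin n,
        |(if d i ω = e then Y i ω else 0) / p i e - ybar i e| ≤ k₁ * k₂ + k₁ := by
      intro i
      have hp0' : 0 ≤ p i e := by rw [hp]; exact ENNReal.toReal_nonneg
      have h1 : |(if d i ω = e then Y i ω else 0)| ≤ k₁ := by
        split_ifs
        · exact hω i
        · simpa using hk₁0
      calc |(if d i ω = e then Y i ω else 0) / p i e - ybar i e|
          ≤ |(if d i ω = e then Y i ω else 0) / p i e| + |ybar i e| := abs_sub _ _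
        _ ≤ k₁ * k₂ + k₁ := by
            refine add_le_add ?_ (hybabs i e)
            rw [abs_div, abs_of_nonneg hp0', div_eq_mul_inv, ← one_div]
            exact mul_le_mul h1 (hke i) (one_div_nonneg.mpr hp0') hk₁0
    calc |(1 / (n : ℝ)) * ∑ i, ((if d i ω = e then Y i ω else 0) / p i e - ybar i e)|
        = (1 / (n : ℝ)) * |∑ i, ((if d i ω = e then Y i ω else 0) / p i e - ybar i e)| := by
          rw [abs_mul, abs_of_nonneg (by positivity : (0:ℝ) ≤ 1 / (n:ℝ))]
      _ ≤ (1 / (n : ℝ)) * ((n : ℝ) * (k₁ * k₂ + k₁)) := by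
          refine mul_le_mul_of_nonneg_left ?_ (by positivity)
          calc |∑ i, ((if d i ω = e then Y i ω else 0) / p i e - ybar i e)|
              ≤ ∑ i, |(if d i ω = e then Y i ω else 0) / p i e - ybar i e| :=
                Finset.abs_sum_le_sum_abs _ _
            _ ≤ ∑ _i : Fin n, (k₁ * k₂ + k₁) := Finset.sum_le_sum fun i _ => hterm i
            _ = (n : ℝ) * (k₁ * k₂ + k₁) := by
                simp only [Finset.sum_const, Finset.card_univ, Fintype.card_fin, nsmul_eq_mul]
      _ = k₁ * k₂ + k₁ := by
          have hnne : (n : ℝ) ≠ 0 := Nat.cast_ne_zero.mpr hn.ne'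
          field_simp
  have hGam := hGm a
  have hGbm := hGm b
  have hGab := hGb a (fun i => hk₂ i a hamem)
  have hGbb := hGb b (fun i => hk₂ i b hbmem)
  have hGa2 : Integrable (fun ω => ((1 / (n : ℝ)) * ∑ i,
      ((if d i ω = a then Y i ω else 0) / p i a - ybar i a)) ^ 2) P := by
    have h := integrable_mul_of_bdd hGam.aestronglyMeasurable hGam.aestronglyMeasurable hGab hGab
    simpa [pow_two] using h
  have hGb2 : Integrable (fun ω => (-((1 / (n : ℝ)) * ∑ i,
      ((if d i ω = b then Y i ω else 0) / p i b - ybar i b))) ^ 2) P := by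
    have h := integrable_mul_of_bdd hGbm.aestronglyMeasurable hGbm.aestronglyMeasurable hGbb hGbb
    have h2 : Integrable (fun ω => ((1 / (n : ℝ)) * ∑ i,
        ((if d i ω = b then Y i ω else 0) / p i b - ybar i b)) ^ 2) P := by
      simpa [pow_two] using h
    simpa [neg_pow] using h2
  have hGaGb : Integrable (fun ω => ((1 / (n : ℝ)) * ∑ i,
      ((if d i ω = a then Y i ω else 0) / p i a - ybar i a))
      * (-((1 / (n : ℝ)) * ∑ i,
      ((if d i ω = b then Y i ω else 0) / p i b - ybar i b)))) P := by
    refine integrable_mul_of_bdd (Bf := k₁ * k₂ + k₁) (Bg := k₁ * k₂ + k₁)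
      hGam.aestronglyMeasurable hGbm.aestronglyMeasurable.neg hGab ?_
    filter_upwards [hGbb] with ω hω
    simpa [abs_neg] using hω
  rw [show (fun ω => (τhat ω - τbar) ^ 2) = fun ω =>
      (((1 / (n : ℝ)) * ∑ i, ((if d i ω = a then Y i ω else 0) / p i a - ybar i a))
        + -((1 / (n : ℝ)) * ∑ i, ((if d i ω = b then Y i ω else 0) / p i b - ybar i b))) ^ 2
    from funext fun ω => by rw [hpt ω]]
  have htri := L2_triangle hGa2 hGb2 hGaGb
  have hnegsq : ∫ ω, (-((1 / (n : ℝ)) * ∑ i,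
      ((if d i ω = b then Y i ω else 0) / p i b - ybar i b))) ^ 2 ∂P
      = ∫ ω, ((1 / (n : ℝ)) * ∑ i,
      ((if d i ω = b then Y i ω else 0) / p i b - ybar i b)) ^ 2 ∂P := by
    congr 1
    funext ω
    ring
  rw [hnegsq] at htri
  refine le_trans htri ?_
  refine le_trans (add_le_add hKa hKb) ?_
  -- numerical comparison
  have hs2 : Real.sqrt 2 ≤ 1.5 := by
    rw [show (1.5 : ℝ) = Real.sqrt (1.5 ^ 2) from (Real.sqrt_sq (by norm_num)).symm]
    exact Real.sqrt_le_sqrt (by norm_num)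
  have hX0 : 0 ≤ k₁ * Real.sqrt (k₂ / (n : ℝ)) :=
    mul_nonneg hk₁0 (Real.sqrt_nonneg _)
  have hca : 0 ≤ k₁ * k₂ * Real.sqrt (Cdep a) :=
    mul_nonneg (mul_nonneg hk₁0 hk₂0) (Real.sqrt_nonneg _)
  have hcb : 0 ≤ k₁ * k₂ * Real.sqrt (Cdep b) :=
    mul_nonneg (mul_nonneg hk₁0 hk₂0) (Real.sqrt_nonneg _)
  have hsc := mul_le_mul_of_nonneg_right hs2 hX0
  nlinarith [hsc, hca, hcb, Real.sqrt_nonneg (max (Edep a) 0), Real.sqrt_nonneg (max (Edep b) 0),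
    Real.sqrt_nonneg (max (Udep a) 0), Real.sqrt_nonneg (max (Udep b) 0)]
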